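/- Let w ∈ Cl(g,κ) be homogeneous of parity ε ∈ {0,1} (w lies in the even part if ε = 0 and in the odd part if ε = 1). For a, a' ∈ g, put X := (1/4)(Θ·w − (−1)^ε w·Θ) and Y := ι(a')·w − (−1)^ε w·ι(a). Then τ'_{a'}·w − w·τ'_a = −(ι(a')·X − (−1)^{ε+1} X·ι(a)) − (1/4)(Θ·Y + (−1)^ε Y·Θ). -/

import Mathlib

open CliffordAlgebra

section Aux
variable {g : Type*} [LieRing g] [LieAlgebra ℂ g]
  (κ : LinearMap.BilinForm ℂ g)
  (hsymm : ∀ a b : g, κ a b = κ b a)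
  (hinv : ∀ a b c : g, κ ⁅a, b⁆ c = κ a ⁅b, c⁆)
  (hnd : κ.Nondegenerate)
  {m : ℕ} (e : Module.Basis (Fin m) ℂ g) (e' : Fin m → g)
  (hdual : ∀ i j, κ (e i) (e' j) = if i = j then (1 : ℂ) else 0)

include hdual in
lemma rep1 (x : g) : ∑ i, κ x (e' i) • e i = x := by
  conv_rhs => rw [← Module.Basis.sum_repr e x]
  refine Finset.sum_congr rfl fun i _ => ?_
  congr 1
  conv_lhs => rw [← Module.Basis.sum_repr e x]
  simp [-Module.Basis.sum_repr, Finset.sum_apply, hdual]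

include hsymm hnd hdual in
lemma rep2 (x : g) : ∑ i, κ x (e i) • e' i = x := by
  have h : ∀ z : g, κ (∑ i, κ x (e i) • e' i - x) z = 0 := by
    have hb : ∀ j, κ (∑ i, κ x (e i) • e' i - x) (e j) = 0 := by
      intro j
      have : κ (e j) (∑ i, κ x (e i) • e' i) = κ x (e j) := by
        rw [map_sum]
        simp only [map_smul, smul_eq_mul]
        rw [Finset.sum_eq_single j]
        · rw [hdual]; simp
        · intro i _ hij; rw [hdual]; simp [Ne.symm hij]
        · simp
      rw [map_sub, LinearMap.sub_apply, hsymm _ (e j), this, hsymm x]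
      ring
    intro z
    conv_lhs => rw [← Module.Basis.sum_repr e z]
    rw [map_sum]
    simp only [map_smul, smul_eq_mul]
    refine Finset.sum_eq_zero fun j _ => ?_
    rw [hb]; ring
  have := hnd.1 _ h
  exact sub_eq_zero.mp this

include hsymm hinv in
lemma skw (b x y : g) : κ ⁅b, x⁆ y = - κ x ⁅b, y⁆ := by
  rw [hsymm x, hinv, ← lie_skew x y, map_neg, hinv]

include hsymm hinv hdual in
lemma trz (b : g) : ∑ j, κ ⁅b, e j⁆ (e' j) = 0 := by
  have key : ∀ j, κ ⁅b, e j⁆ (e' j)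
      = ∑ k, κ (e' j) (e' k) * κ ⁅b, e j⁆ (e k) := by
    intro j
    conv_lhs => rw [← rep1 κ e e' hdual (e' j)]
    rw [map_sum]
    simp [mul_comm]
  have h2 : (∑ j, ∑ k, κ (e' j) (e' k) * κ ⁅b, e j⁆ (e k))
      = - ∑ j, ∑ k, κ (e' j) (e' k) * κ ⁅b, e j⁆ (e k) := by
    conv_lhs => rw [Finset.sum_comm]
    rw [← Finset.sum_neg_distrib]
    refine Finset.sum_congr rfl fun j _ => ?_
    rw [← Finset.sum_neg_distrib]
    refine Finset.sum_congr rfl fun k _ => ?_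
    rw [hsymm (e' k) (e' j)]
    have : κ ⁅b, e k⁆ (e j) = - κ ⁅b, e j⁆ (e k) := by
      rw [skw κ hsymm hinv, hsymm]
    rw [this]; ring
  have h3 : (∑ j, ∑ k, κ (e' j) (e' k) * κ ⁅b, e j⁆ (e k)) = 0 := by
    linear_combination h2 / 2
  simp_rw [key]; exact h3

end Aux

section Cliff
variable {g : Type*} [LieRing g] [LieAlgebra ℂ g]
  (κ : LinearMap.BilinForm ℂ g)
  (hsymm : ∀ a b : g, κ a b = κ b a)
  (hinv : ∀ a b c : g, κ ⁅a, b⁆ c = κ a ⁅b, c⁆)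
  (hnd : κ.Nondegenerate)
  {m : ℕ} (e : Module.Basis (Fin m) ℂ g) (e' : Fin m → g)
  (hdual : ∀ i j, κ (e i) (e' j) = if i = j then (1 : ℂ) else 0)

include hsymm in
lemma swp (x y : g) :
    ι (LinearMap.BilinMap.toQuadraticMap κ) x * ι (LinearMap.BilinMap.toQuadraticMap κ) y
      = (2 * κ x y) • (1 : CliffordAlgebra (LinearMap.BilinMap.toQuadraticMap κ))
        - ι (LinearMap.BilinMap.toQuadraticMap κ) y * ι (LinearMap.BilinMap.toQuadraticMap κ) x := by
  have h := CliffordAlgebra.ι_mul_ι_add_swap (Q := LinearMap.BilinMap.toQuadraticMap κ) x y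
  rw [LinearMap.BilinMap.polar_toQuadraticMap, Algebra.algebraMap_eq_smul_one] at h
  rw [eq_sub_iff_add_eq, h, hsymm y x]
  ring_nf

lemma tri {A : Type*} [Ring A] [Algebra ℂ A] (u x y z : A) (c1 c2 c3 : ℂ)
    (e1 : u * x = c1 • (1:A) - x * u) (e2 : u * y = c2 • (1:A) - y * u)
    (e3 : u * z = c3 • (1:A) - z * u) :
    u * (x * y * z) + (x * y * z) * u = c1 • (y * z) - c2 • (x * z) + c3 • (x * y) := by
  have h1 : u * (x * y * z) = ((u * x) * y) * z := by rw [mul_assoc, mul_assoc, mul_assoc]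
  rw [h1, e1, sub_mul, sub_mul, smul_mul_assoc, smul_mul_assoc, one_mul,
    mul_assoc x u y, e2, mul_sub, sub_mul, mul_smul_comm, mul_one, smul_mul_assoc,
    ← mul_assoc x y u, mul_assoc (x * y) u z, e3, mul_sub, mul_smul_comm, mul_one, ← mul_assoc (x*y) z u]
  abel

end Cliff

section Key
variable {g : Type*} [LieRing g] [LieAlgebra ℂ g]
  (κ : LinearMap.BilinForm ℂ g)
  (hsymm : ∀ a b : g, κ a b = κ b a)
  (hinv : ∀ a b c : g, κ ⁅a, b⁆ c = κ a ⁅b, c⁆)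
  (hnd : κ.Nondegenerate)
  {m : ℕ} (e : Module.Basis (Fin m) ℂ g) (e' : Fin m → g)
  (hdual : ∀ i j, κ (e i) (e' j) = if i = j then (1 : ℂ) else 0)

lemma sum_lie_left (s : Finset (Fin m)) (c : Fin m → ℂ) (v : Fin m → g) (y : g) :
    ⁅∑ j ∈ s, c j • v j, y⁆ = ∑ j ∈ s, c j • ⁅v j, y⁆ := by
  induction s using Finset.induction_on with
  | empty => simp
  | insert _ _ h ih => simp [Finset.sum_insert h, add_lie, smul_lie, ih]

lemma sum_lie_right (s : Finset (Fin m)) (c : Fin m → ℂ) (v : Fin m → g) (y : g) :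
    ⁅y, ∑ j ∈ s, c j • v j⁆ = ∑ j ∈ s, c j • ⁅y, v j⁆ := by
  induction s using Finset.induction_on with
  | empty => simp
  | insert _ _ h ih => simp [Finset.sum_insert h, lie_add, lie_smul, ih]

include hdual in
lemma hcol1 (b' Z : g) : ∑ i, κ b' (e' i) * κ (e i) Z = κ b' Z := by
  conv_rhs => rw [← rep1 κ e e' hdual b']
  rw [map_sum, LinearMap.sum_apply]
  simp only [map_smul, LinearMap.smul_apply, smul_eq_mul]

include hdual in
lemma hcol2 (b y : g) : ∑ j, κ b (e' j) • ⁅e j, y⁆ = ⁅b, y⁆ := by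
  conv_rhs => rw [← rep1 κ e e' hdual b]
  rw [sum_lie_left]

include hdual in
lemma hcol3 (b y : g) : ∑ k, κ b (e' k) • ⁅y, e k⁆ = ⁅y, b⁆ := by
  conv_rhs => rw [← rep1 κ e e' hdual b]
  rw [sum_lie_right]

include hsymm hinv hnd hdual in
lemma key {A : Type*} [Ring A] [Algebra ℂ A] (F : g →ₗ[ℂ] A)
    (hswap : ∀ x y : g, F x * F y = (2 * κ x y) • (1 : A) - F y * F x) (b : g) :
    F b * ((6 : ℂ)⁻¹ • ∑ i : Fin m, ∑ j : Fin m, ∑ k : Fin m,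
        κ (e i) ⁅e j, e k⁆ • (F (e' i) * F (e' j) * F (e' k)))
      + ((6 : ℂ)⁻¹ • ∑ i : Fin m, ∑ j : Fin m, ∑ k : Fin m,
        κ (e i) ⁅e j, e k⁆ • (F (e' i) * F (e' j) * F (e' k))) * F b
      = -(∑ j : Fin m, F ⁅b, e j⁆ * F (e' j)) := by
  have hfl : ∀ (s : Finset (Fin m)) (c : Fin m → ℂ) (v : Fin m → g),
      ∑ i ∈ s, c i • F (v i) = F (∑ i ∈ s, c i • v i) := by
    intro s c v
    simp only [← map_smul, ← map_sum]
  have main : ∀ i j k : Fin m,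
      F b * (F (e' i) * F (e' j) * F (e' k)) + (F (e' i) * F (e' j) * F (e' k)) * F b =
        (2 * κ b (e' i)) • (F (e' j) * F (e' k)) - (2 * κ b (e' j)) • (F (e' i) * F (e' k))
          + (2 * κ b (e' k)) • (F (e' i) * F (e' j)) :=
    fun i j k => tri _ _ _ _ _ _ _ (hswap b (e' i)) (hswap b (e' j)) (hswap b (e' k))
  have expand : F b * ((6 : ℂ)⁻¹ • ∑ i : Fin m, ∑ j : Fin m, ∑ k : Fin m,
        κ (e i) ⁅e j, e k⁆ • (F (e' i) * F (e' j) * F (e' k)))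
      + ((6 : ℂ)⁻¹ • ∑ i : Fin m, ∑ j : Fin m, ∑ k : Fin m,
        κ (e i) ⁅e j, e k⁆ • (F (e' i) * F (e' j) * F (e' k))) * F b = (6 : ℂ)⁻¹ •
      ∑ i : Fin m, ∑ j : Fin m, ∑ k : Fin m, κ (e i) ⁅e j, e k⁆ •
        (F b * (F (e' i) * F (e' j) * F (e' k)) + (F (e' i) * F (e' j) * F (e' k)) * F b) := by
    simp only [mul_smul_comm, smul_mul_assoc, Finset.mul_sum, Finset.sum_mul,
      ← smul_add, ← Finset.sum_add_distrib]
  rw [expand]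
  simp only [main, smul_sub, smul_add, Finset.sum_sub_distrib, Finset.sum_add_distrib]
  set S := ∑ j : Fin m, F ⁅b, e j⁆ * F (e' j) with hS
  have hA1 : ∑ i : Fin m, ∑ j : Fin m, ∑ k : Fin m,
      κ (e i) ⁅e j, e k⁆ • (2 * κ b (e' i)) • (F (e' j) * F (e' k)) = (-2 : ℂ) • S := by
    rw [Finset.sum_comm]
    have step1 : ∀ j : Fin m, ∑ i : Fin m, ∑ k : Fin m,
        κ (e i) ⁅e j, e k⁆ • (2 * κ b (e' i)) • (F (e' j) * F (e' k))
        = ∑ k : Fin m, (2 * κ ⁅b, e j⁆ (e k)) • (F (e' j) * F (e' k)) := by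
      intro j
      rw [Finset.sum_comm]
      refine Finset.sum_congr rfl fun k _ => ?_
      simp only [smul_smul]
      rw [← Finset.sum_smul]
      congr 1
      rw [hinv, ← hcol1 κ e e' hdual b ⁅e j, e k⁆, Finset.mul_sum]
      exact Finset.sum_congr rfl fun i _ => by ring
    rw [Finset.sum_congr rfl fun j _ => step1 j]
    have step2 : ∀ j : Fin m, ∑ k : Fin m, (2 * κ ⁅b, e j⁆ (e k)) • (F (e' j) * F (e' k))
        = (2 : ℂ) • (F (e' j) * F ⁅b, e j⁆) := by
      intro j
      simp only [← mul_smul_comm]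
      rw [← Finset.mul_sum, hfl]
      have : ∑ k : Fin m, (2 * κ ⁅b, e j⁆ (e k)) • e' k = (2:ℂ) • ⁅b, e j⁆ := by
        conv_rhs => rw [← rep2 κ hsymm hnd e e' hdual ⁅b, e j⁆]
        rw [Finset.smul_sum]
        exact Finset.sum_congr rfl fun k _ => by rw [smul_smul]; try ring_nf
      rw [this, map_smul, mul_smul_comm]
    rw [Finset.sum_congr rfl fun j _ => step2 j]
    have step3 : ∀ j : Fin m, (2:ℂ) • (F (e' j) * F ⁅b, e j⁆)
        = (4 * κ ⁅b, e j⁆ (e' j)) • (1 : A) - (2:ℂ) • (F ⁅b, e j⁆ * F (e' j)) := by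
      intro j
      rw [hswap (e' j) ⁅b, e j⁆, smul_sub, smul_smul, hsymm (e' j)]
      congr 2
      ring
    rw [Finset.sum_congr rfl fun j _ => step3 j]
    rw [Finset.sum_sub_distrib, ← Finset.sum_smul, ← Finset.mul_sum,
      trz κ hsymm hinv e e' hdual b]
    simp [hS, Finset.smul_sum]
  have hA2 : ∑ i : Fin m, ∑ j : Fin m, ∑ k : Fin m,
      κ (e i) ⁅e j, e k⁆ • (2 * κ b (e' j)) • (F (e' i) * F (e' k)) = (2 : ℂ) • S := by
    have step1 : ∀ i : Fin m, ∑ j : Fin m, ∑ k : Fin m,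
        κ (e i) ⁅e j, e k⁆ • (2 * κ b (e' j)) • (F (e' i) * F (e' k))
        = ∑ k : Fin m, (2 * κ (e i) ⁅b, e k⁆) • (F (e' i) * F (e' k)) := by
      intro i
      rw [Finset.sum_comm]
      refine Finset.sum_congr rfl fun k _ => ?_
      simp only [smul_smul]
      rw [← Finset.sum_smul]
      congr 1
      have h := congrArg (κ (e i)) (hcol2 κ e e' hdual b (e k))
      rw [map_sum] at h
      simp only [map_smul, smul_eq_mul] at h
      rw [← h, Finset.mul_sum]
      exact Finset.sum_congr rfl fun j _ => by ring
    rw [Finset.sum_congr rfl fun i _ => step1 i]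
    rw [Finset.sum_comm]
    have step2 : ∀ k : Fin m, ∑ i : Fin m, (2 * κ (e i) ⁅b, e k⁆) • (F (e' i) * F (e' k))
        = (2:ℂ) • (F ⁅b, e k⁆ * F (e' k)) := by
      intro k
      simp only [← smul_mul_assoc]
      rw [← Finset.sum_mul, hfl]
      have : ∑ i : Fin m, (2 * κ (e i) ⁅b, e k⁆) • e' i = (2:ℂ) • ⁅b, e k⁆ := by
        conv_rhs => rw [← rep2 κ hsymm hnd e e' hdual ⁅b, e k⁆]
        rw [Finset.smul_sum]
        exact Finset.sum_congr rfl fun i _ => by rw [smul_smul, hsymm (e i)]; try ring_nf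
      rw [this, map_smul, smul_mul_assoc]
    rw [Finset.sum_congr rfl fun k _ => step2 k]
    rw [hS, Finset.smul_sum]
  have hA3 : ∑ i : Fin m, ∑ j : Fin m, ∑ k : Fin m,
      κ (e i) ⁅e j, e k⁆ • (2 * κ b (e' k)) • (F (e' i) * F (e' j)) = (-2 : ℂ) • S := by
    have step1 : ∀ i j : Fin m, ∑ k : Fin m,
        κ (e i) ⁅e j, e k⁆ • (2 * κ b (e' k)) • (F (e' i) * F (e' j))
        = (2 * κ (e i) ⁅e j, b⁆) • (F (e' i) * F (e' j)) := by
      intro i j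
      simp only [smul_smul]
      rw [← Finset.sum_smul]
      congr 1
      have h := congrArg (κ (e i)) (hcol3 κ e e' hdual b (e j))
      rw [map_sum] at h
      simp only [map_smul, smul_eq_mul] at h
      rw [← h, Finset.mul_sum]
      exact Finset.sum_congr rfl fun k _ => by ring
    simp only [step1]
    rw [Finset.sum_comm]
    have step2 : ∀ j : Fin m, ∑ i : Fin m, (2 * κ (e i) ⁅e j, b⁆) • (F (e' i) * F (e' j))
        = (-2:ℂ) • (F ⁅b, e j⁆ * F (e' j)) := by
      intro j
      simp only [← smul_mul_assoc]
      rw [← Finset.sum_mul, hfl]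
      have : ∑ i : Fin m, (2 * κ (e i) ⁅e j, b⁆) • e' i = (-2:ℂ) • ⁅b, e j⁆ := by
        have h2 : ((-2:ℂ)) • ⁅b, e j⁆ = (2:ℂ) • ⁅e j, b⁆ := by
          rw [← lie_skew b (e j)]; module
        rw [h2]
        conv_rhs => rw [← rep2 κ hsymm hnd e e' hdual ⁅e j, b⁆]
        rw [Finset.smul_sum]
        exact Finset.sum_congr rfl fun i _ => by rw [smul_smul, hsymm (e i)]; try ring_nf
      rw [this, map_smul, smul_mul_assoc]
      try module
    rw [Finset.sum_congr rfl fun j _ => step2 j]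
    rw [hS, Finset.smul_sum]
  rw [hA1, hA2, hA3]
  module

end Key

open CliffordAlgebra in
/-- Let `w ∈ Cl(g,κ)` be homogeneous of parity `ε ∈ {0,1}`.  For
`a, a' ∈ g`, put `X := (1/4)(Θ·w − (−1)^ε w·Θ)` and `Y := ι(a')·w − (−1)^ε w·ι(a)`.  Then
`τ'_{a'}·w − w·τ'_a = −(ι(a')·X − (−1)^{ε+1} X·ι(a)) − (1/4)(Θ·Y + (−1)^ε Y·Θ)`. -/
theorem statement15 (g : Type*) [LieRing g] [LieAlgebra ℂ g] [FiniteDimensional ℂ g]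
    (κ : LinearMap.BilinForm ℂ g)
    (hsymm : ∀ a b : g, κ a b = κ b a)
    (hinv : ∀ a b c : g, κ ⁅a, b⁆ c = κ a ⁅b, c⁆)
    (hnd : κ.Nondegenerate)
    (m : ℕ) (e : Module.Basis (Fin m) ℂ g) (e' : Fin m → g)
    (hdual : ∀ i j, κ (e i) (e' j) = if i = j then (1 : ℂ) else 0)
    (τ' : g → CliffordAlgebra (LinearMap.BilinMap.toQuadraticMap κ))
    (hτ' : ∀ a : g, τ' a = (4 : ℂ)⁻¹ •
      ∑ i : Fin m, ι (LinearMap.BilinMap.toQuadraticMap κ) ⁅a, e i⁆ *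
        ι (LinearMap.BilinMap.toQuadraticMap κ) (e' i))
    (Θ : CliffordAlgebra (LinearMap.BilinMap.toQuadraticMap κ))
    (hΘ : Θ = (6 : ℂ)⁻¹ •
      ∑ i : Fin m, ∑ j : Fin m, ∑ k : Fin m, κ (e i) ⁅e j, e k⁆ •
        (ι (LinearMap.BilinMap.toQuadraticMap κ) (e' i) *
          ι (LinearMap.BilinMap.toQuadraticMap κ) (e' j) *
          ι (LinearMap.BilinMap.toQuadraticMap κ) (e' k)))
    (ε : ℕ) (hε : ε = 0 ∨ ε = 1)
    (w : CliffordAlgebra (LinearMap.BilinMap.toQuadraticMap κ))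
    (hw : w ∈ CliffordAlgebra.evenOdd (LinearMap.BilinMap.toQuadraticMap κ) (ε : ZMod 2))
    (X Y : g → g → CliffordAlgebra (LinearMap.BilinMap.toQuadraticMap κ))
    (hX : ∀ a a' : g, X a a' =
      (4 : ℂ)⁻¹ • (Θ * w - ((-1 : ℂ) ^ ε) • (w * Θ)))
    (hY : ∀ a a' : g, Y a a' =
      ι (LinearMap.BilinMap.toQuadraticMap κ) a' * w -
        ((-1 : ℂ) ^ ε) • (w * ι (LinearMap.BilinMap.toQuadraticMap κ) a)) :
    ∀ a a' : g,
      τ' a' * w - w * τ' a =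
        -(ι (LinearMap.BilinMap.toQuadraticMap κ) a' * X a a' -
            ((-1 : ℂ) ^ (ε + 1)) • (X a a' * ι (LinearMap.BilinMap.toQuadraticMap κ) a)) -
          (4 : ℂ)⁻¹ • (Θ * Y a a' + ((-1 : ℂ) ^ ε) • (Y a a' * Θ)) := by
  intro a a'
  have hkey : ∀ b : g,
      ι (LinearMap.BilinMap.toQuadraticMap κ) b * Θ +
        Θ * ι (LinearMap.BilinMap.toQuadraticMap κ) b =
      -(∑ j : Fin m, ι (LinearMap.BilinMap.toQuadraticMap κ) ⁅b, e j⁆ *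
          ι (LinearMap.BilinMap.toQuadraticMap κ) (e' j)) := by
    intro b
    have h := key κ hsymm hinv hnd e e' hdual
      (F := ι (LinearMap.BilinMap.toQuadraticMap κ)) (swp κ hsymm) b
    rw [← hΘ] at h
    exact h
  have hτ2 : ∀ b : g, τ' b = (-(4:ℂ)⁻¹) •
      (ι (LinearMap.BilinMap.toQuadraticMap κ) b * Θ +
        Θ * ι (LinearMap.BilinMap.toQuadraticMap κ) b) := by
    intro b
    rw [hτ' b, hkey b]
    module
  rw [hX, hY, hτ2 a, hτ2 a']
  rcases hε with rfl | rfl <;>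
  · simp only [pow_zero, pow_one, pow_succ, one_smul, neg_neg, one_mul, mul_one,
      neg_smul, neg_one_smul, smul_neg, smul_add, smul_sub, smul_smul,
      add_mul, sub_mul, mul_add, mul_sub, neg_mul, mul_neg,
      smul_mul_assoc, mul_smul_comm, mul_assoc]
    module
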